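/- Let λ, κ > 0 and c > 0, and let α, β ∈ ℝ with αβ ≤ 0, c⁻¹ < |β|/κ, and (|α|/λ)(|β|/κ) − 1 < c⁻¹(|α|/λ + |β|/κ). Then the discriminant condition (1 + c⁻²)λκ − (c⁻¹κ − |β|)(c⁻¹λ − |α|) > 0 holds, and consequently the quadratic δ ↦ (c⁻¹κ − |β|)δ² + 2δ√((1 + c⁻²)λκ) + (c⁻¹λ − |α|) takes a strictly positive value at some δ > 0. -/

import Mathlib

theorem stmt_8 (lam kap α β c : ℝ) (hlam : 0 < lam) (hkap : 0 < kap) (hc : 0 < c)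
    (hαβ : α * β ≤ 0) (hβ : c⁻¹ < |β| / kap)
    (hCGL : (|α| / lam) * (|β| / kap) - 1 < c⁻¹ * (|α| / lam + |β| / kap)) :
    0 < (1 + c⁻¹ ^ 2) * lam * kap - (c⁻¹ * kap - |β|) * (c⁻¹ * lam - |α|) ∧
    ∃ δ : ℝ, 0 < δ ∧
      0 < (c⁻¹ * kap - |β|) * δ ^ 2 + 2 * δ * Real.sqrt ((1 + c⁻¹ ^ 2) * lam * kap)
          + (c⁻¹ * lam - |α|) := by
  have hci : 0 < c⁻¹ := inv_pos.mpr hc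
  have ha : c⁻¹ * kap - |β| < 0 := by
    nlinarith [(lt_div_iff₀ hkap).mp hβ]
  have hCGL' : |α| * |β| - lam * kap < c⁻¹ * (|α| * kap + |β| * lam) := by
    have h := mul_lt_mul_of_pos_left hCGL (mul_pos hlam hkap)
    have h2 : lam ≠ 0 := hlam.ne'
    have h3 : kap ≠ 0 := hkap.ne'
    field_simp at h
    have h4 := h
    rw [lt_inv_mul_iff₀ hc]
    nlinarith [h4, mul_pos hlam hkap]
  have hD : 0 < (1 + c⁻¹ ^ 2) * lam * kap - (c⁻¹ * kap - |β|) * (c⁻¹ * lam - |α|) := by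
    nlinarith [hCGL', mul_pos hlam hkap]
  refine ⟨hD, ?_⟩
  set s := Real.sqrt ((1 + c⁻¹ ^ 2) * lam * kap) with hs
  have hD' : 0 < (1 + c⁻¹ ^ 2) * lam * kap := by positivity
  have hs2 : s ^ 2 = (1 + c⁻¹ ^ 2) * lam * kap := Real.sq_sqrt hD'.le
  have hspos : 0 < s := Real.sqrt_pos.mpr hD'
  set a := c⁻¹ * kap - |β| with hadef
  set b := c⁻¹ * lam - |α| with hbdef
  have hna : 0 < -a := by linarith
  refine ⟨s / (-a), div_pos hspos hna, ?_⟩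
  have key : a * (s / (-a)) ^ 2 + 2 * (s / (-a)) * s + b = (s ^ 2 - a * b) / (-a) := by
    field_simp [ha.ne]
    ring
  rw [key, hs2]
  exact div_pos hD hna
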